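/- Let L be a union of ≈^t_k-classes and let M be its syntactic semigroup with involution induced by reversal. Then for every idempotent e and every element x of M, e·x·e⋆ = e·x⋆·e⋆. -/

import Mathlib

/-- Number of occurrences of `v` or `v.reverse` in `w`. -/
def occR {A : Type*} [DecidableEq A] (w v : List A) : ℕ :=
  (List.range (w.length + 1)).countP
    (fun i => decide ((w.drop i).take v.length = v ∨ (w.drop i).take v.length = v.reverse))

/-- Equality up to threshold `t`. -/
def thrEq (t i j : ℕ) : Prop := i = j ∨ (t ≤ i ∧ t ≤ j)

/-- The `(k,t)`-locally-reversible threshold testable equivalence. -/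
def LRTT {A : Type*} [DecidableEq A] (k t : ℕ) (w w' : List A) : Prop :=
  (w.length < k ∧ (w' = w ∨ w' = w.reverse)) ∨
  (k ≤ w.length ∧ k ≤ w'.length ∧
    (∀ v : List A, v.length ≤ k → thrEq t (occR w v) (occR w' v)) ∧
    ({w.take (k - 1), (w.drop (w.length - (k - 1))).reverse} : Set (List A)) =
      {w'.take (k - 1), (w'.drop (w'.length - (k - 1))).reverse})

/-- Syntactic congruence of `L`. -/
def SynCong {A : Type*} (L : Set (List A)) (x y : List A) : Prop :=
  ∀ u v : List A, u ++ x ++ v ∈ L ↔ u ++ y ++ v ∈ L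

namespace LRTTaux

variable {A : Type*} [DecidableEq A]

/-- the matching predicate of `occR` -/
def pB (w v : List A) (i : ℕ) : Bool :=
  decide ((w.drop i).take v.length = v ∨ (w.drop i).take v.length = v.reverse)

lemma occR_def (w v : List A) :
    occR w v = (List.range (w.length + 1)).countP (pB w v) := rfl

/-- truncated count: only positions where a full occurrence fits -/
def cnt (w v : List A) : ℕ :=
  (List.range (w.length + 1 - v.length)).countP (pB w v)

lemma pB_false_of_lt (w v : List A) (hv : v ≠ []) (i : ℕ)
    (h : w.length < i + v.length) : pB w v i = false := by
  have hv1 : 0 < v.length := List.length_pos_iff.mpr hv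
  have hlen : ((w.drop i).take v.length).length < v.length := by
    simp only [List.length_take, List.length_drop]
    omega
  simp only [pB, decide_eq_false_iff_not]
  rintro (h1 | h1)
  · rw [h1] at hlen; omega
  · rw [h1, List.length_reverse] at hlen; omega

lemma occR_nil (w : List A) : occR w ([] : List A) = w.length + 1 := by
  simp [occR]

lemma occR_eq_cnt (w v : List A) (hv : v ≠ []) : occR w v = cnt w v := by
  have hv1 : 0 < v.length := List.length_pos_iff.mpr hv
  have hsplit : w.length + 1 =
      (w.length + 1 - v.length) + min v.length (w.length + 1) := by omega
  rw [occR_def, hsplit, List.range_add, List.countP_append, cnt]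
  have hz : List.countP (pB w v)
      (List.map (fun x => (w.length + 1 - v.length) + x)
        (List.range (min v.length (w.length + 1)))) = 0 := by
    rw [List.countP_map, List.countP_eq_zero]
    intro i hi
    have hi' : i < min v.length (w.length + 1) := List.mem_range.mp hi
    simp only [Function.comp_apply]
    rw [pB_false_of_lt w v hv _ (by omega)]
    simp
  omega

lemma seg_reverse (w v : List A) (i : ℕ) (h : i + v.length ≤ w.length) :
    (w.reverse.drop i).take v.length
      = ((w.drop (w.length - v.length - i)).take v.length).reverse := by
  rw [List.drop_reverse, List.take_reverse, List.length_take, List.drop_take]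
  have e1 : min (w.length - i) w.length - v.length = w.length - v.length - i := by omega
  rw [e1]
  have e2 : w.length - i - (w.length - v.length - i) = v.length := by omega
  rw [e2]

lemma map_reflect (N : ℕ) :
    (List.range N).map (fun i => N - 1 - i) = (List.range N).reverse := by
  have h := List.reverse_range' (s := 0) (n := N)
  rw [← List.range_eq_range'] at h
  rw [h]
  apply List.map_congr_left
  intro i hi
  have := List.mem_range.mp hi
  omega

lemma cnt_reverse (w v : List A) : cnt w.reverse v = cnt w v := by
  rcases lt_or_ge w.length v.length with hw | hw
  · have h1 : w.length + 1 - v.length = 0 := by omega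
    simp [cnt, List.length_reverse, h1]
  · set N := w.length + 1 - v.length with hN
    have hNr : w.reverse.length + 1 - v.length = N := by
      rw [List.length_reverse]
    rw [cnt, cnt, hNr, ← hN]
    have step1 : List.countP (pB w.reverse v) (List.range N)
        = List.countP (fun i => pB w v (N - 1 - i)) (List.range N) := by
      apply List.countP_congr
      intro i hi
      have hi' : i < N := List.mem_range.mp hi
      have hseg := seg_reverse w v i (by omega)
      have hidx : w.length - v.length - i = N - 1 - i := by omega
      rw [hidx] at hseg
      simp only [pB, hseg, decide_eq_true_eq]
      rw [List.reverse_eq_iff, List.reverse_eq_iff, List.reverse_reverse]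
      exact or_comm
    rw [step1]
    have : (fun i => pB w v (N - 1 - i)) = (pB w v) ∘ (fun i => N - 1 - i) := rfl
    rw [this, ← List.countP_map, map_reflect, List.countP_reverse]

set_option linter.unusedSectionVars false

lemma seg_block1 (a c : List A) (n i : ℕ) (hi : i ≤ a.length) (hn : n ≤ c.length) :
    ((a ++ c).drop i).take n
      = (a.drop i).take n ++ (c.take n).take (n - (a.length - i)) := by
  rw [List.drop_append, Nat.sub_eq_zero_of_le hi, List.drop_zero,
    List.take_append, List.length_drop, List.take_take]
  congr 1
  rw [min_eq_left (by omega)]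

lemma seg_block2 (a m b : List A) (n j : ℕ) (hj : j + n ≤ m.length) :
    ((a ++ (m ++ b)).drop (a.length + j)).take n = (m.drop j).take n := by
  rw [List.drop_length_add_append, List.drop_append,
    List.take_append_of_le_length (by rw [List.length_drop]; omega)]

lemma seg_block3 (a m b : List A) (n j : ℕ) (hn : n ≤ m.length) :
    ((a ++ (m ++ b)).drop (a.length + ((m.length - n + 1) + j))).take n
      = ((m.drop (m.length - n)).drop (1 + j) ++ b.drop (1 + j - n)).take n := by
  rw [List.drop_length_add_append, List.drop_append, List.drop_drop]
  congr 3 <;> omega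

/-- Splitting the truncated occurrence count of `a ++ mm ++ b` into three blocks:
positions touching `a`, positions inside `mm`, positions touching `b`. The first
and third blocks depend on `mm` only via `mm.take v.length` resp.
`mm.drop (mm.length - v.length)`. -/
lemma cnt_split (a b mm v : List A) (hv : 0 < v.length) (hvm : v.length ≤ mm.length) :
    cnt (a ++ (mm ++ b)) v =
      ((List.range a.length).countP
        (fun i => decide
          ((a.drop i).take v.length ++ (mm.take v.length).take (v.length - (a.length - i)) = v ∨
          (a.drop i).take v.length ++ (mm.take v.length).take (v.length - (a.length - i)) = v.reverse))
      + cnt mm v)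
      + (List.range b.length).countP
        (fun j => decide
          (((mm.drop (mm.length - v.length)).drop (1 + j) ++ b.drop (1 + j - v.length)).take v.length = v ∨
          ((mm.drop (mm.length - v.length)).drop (1 + j) ++ b.drop (1 + j - v.length)).take v.length = v.reverse)) := by
  have hN : (a ++ (mm ++ b)).length + 1 - v.length
      = a.length + ((mm.length - v.length + 1) + b.length) := by
    simp only [List.length_append]; omega
  rw [cnt, hN, List.range_add, List.countP_append, List.range_add, List.map_append,
    List.countP_append, List.countP_map, List.map_map, List.countP_map]
  have b1 : List.countP (pB (a ++ (mm ++ b)) v) (List.range a.length)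
      = (List.range a.length).countP
        (fun i => decide
          ((a.drop i).take v.length ++ (mm.take v.length).take (v.length - (a.length - i)) = v ∨
          (a.drop i).take v.length ++ (mm.take v.length).take (v.length - (a.length - i)) = v.reverse)) := by
    apply List.countP_congr
    intro i hi
    have hi' : i < a.length := List.mem_range.mp hi
    have hseg : ((a ++ (mm ++ b)).drop i).take v.length
        = (a.drop i).take v.length ++ (mm.take v.length).take (v.length - (a.length - i)) := by
      rw [seg_block1 a (mm ++ b) v.length i (by omega)
        (by rw [List.length_append]; omega)]
      rw [List.take_append_of_le_length hvm]
    simp only [pB, hseg]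
  have b2 : List.countP (pB (a ++ (mm ++ b)) v ∘ (fun x => a.length + x))
      (List.range (mm.length - v.length + 1)) = cnt mm v := by
    have e : List.countP (pB (a ++ (mm ++ b)) v ∘ (fun x => a.length + x))
        (List.range (mm.length - v.length + 1))
        = List.countP (pB mm v) (List.range (mm.length - v.length + 1)) := by
      apply List.countP_congr
      intro j hj
      have hj' : j < mm.length - v.length + 1 := List.mem_range.mp hj
      have hseg := seg_block2 a mm b v.length j (by omega)
      simp only [Function.comp_apply, pB, hseg]
    rw [e, cnt, show mm.length + 1 - v.length = mm.length - v.length + 1 from by omega]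
  have b3 : List.countP (pB (a ++ (mm ++ b)) v ∘
        ((fun x => a.length + x) ∘ (fun x => (mm.length - v.length + 1) + x)))
      (List.range b.length)
      = (List.range b.length).countP
        (fun j => decide
          (((mm.drop (mm.length - v.length)).drop (1 + j) ++ b.drop (1 + j - v.length)).take v.length = v ∨
          ((mm.drop (mm.length - v.length)).drop (1 + j) ++ b.drop (1 + j - v.length)).take v.length = v.reverse)) := by
    apply List.countP_congr
    intro j hj
    have hseg := seg_block3 a mm b v.length j hvm
    simp only [Function.comp_apply, pB, hseg]
  rw [b1, b2, b3]
  omega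

/-- Replacing the middle factor by another one with the same length, the same
ends, and the same occurrence count does not change occurrence counts. -/
lemma occR_context (a b m m' v : List A)
    (hlen : m'.length = m.length) (hvm : v.length ≤ m.length)
    (hpre : m'.take v.length = m.take v.length)
    (hsuf : m'.drop (m.length - v.length) = m.drop (m.length - v.length))
    (hcnt : cnt m' v = cnt m v) :
    occR (a ++ (m' ++ b)) v = occR (a ++ (m ++ b)) v := by
  rcases eq_or_ne v [] with rfl | hv
  · rw [occR_nil, occR_nil]
    simp [List.length_append, hlen]
  · have hv1 : 0 < v.length := List.length_pos_iff.mpr hv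
    rw [occR_eq_cnt _ _ hv, occR_eq_cnt _ _ hv,
      cnt_split a b m' v hv1 (by omega), cnt_split a b m v hv1 hvm,
      hlen, hpre, hsuf, hcnt]

lemma occR_reverse (w v : List A) : occR w.reverse v = occR w v := by
  rcases eq_or_ne v [] with rfl | hv
  · rw [occR_nil, occR_nil, List.length_reverse]
  · rw [occR_eq_cnt _ _ hv, occR_eq_cnt _ _ hv, cnt_reverse]

lemma lrtt_rev (k t : ℕ) (hk : 0 < k) (w : List A) : LRTT k t w w.reverse := by
  rcases lt_or_ge w.length k with h | h
  · exact Or.inl ⟨h, Or.inr rfl⟩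
  · refine Or.inr ⟨h, by rwa [List.length_reverse], fun v _ => Or.inl (occR_reverse w v).symm, ?_⟩
    have h1 : w.reverse.take (k - 1) = (w.drop (w.length - (k - 1))).reverse := by
      rw [List.take_reverse]
    have h2 : (w.reverse.drop (w.reverse.length - (k - 1))).reverse = w.take (k - 1) := by
      rw [List.length_reverse, List.drop_reverse, List.reverse_reverse]
      congr 1
      omega
    rw [h1, h2, Set.pair_comm]

lemma lrtt_main (k t : ℕ) (hk : 0 < k) (a b p s : List A) (hp : k ≤ p.length) :
    LRTT k t (a ++ (p ++ s ++ p.reverse) ++ b) (a ++ (p ++ s.reverse ++ p.reverse) ++ b) := by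
  set m := p ++ s ++ p.reverse with hm
  set m' := p ++ s.reverse ++ p.reverse with hm'
  have hrev : m' = m.reverse := by
    simp [hm, hm', List.reverse_append, List.append_assoc]
  have hlen' : m'.length = m.length := by rw [hrev, List.length_reverse]
  have hml : m.length = p.length + s.length + p.length := by
    simp [hm, List.length_append, List.length_reverse]; omega
  have hocc : ∀ v : List A, v.length ≤ k →
      occR (a ++ (m' ++ b)) v = occR (a ++ (m ++ b)) v := by
    intro v hvk
    have hvm : v.length ≤ m.length := by omega
    have hvp : v.length ≤ p.length := le_trans hvk hp
    have hpre : m'.take v.length = m.take v.length := by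
      rw [hm, hm', List.append_assoc, List.append_assoc,
        List.take_append_of_le_length hvp, List.take_append_of_le_length hvp]
    have hsuf : m'.drop (m.length - v.length) = m.drop (m.length - v.length) := by
      have e1 : m.length - v.length = (p ++ s).length + (p.length - v.length) := by
        simp only [List.length_append]; omega
      have e2 : m.length - v.length = (p ++ s.reverse).length + (p.length - v.length) := by
        simp only [List.length_append, List.length_reverse]; omega
      rw [hm, hm']
      conv_lhs => rw [e2]
      conv_rhs => rw [e1]
      rw [List.drop_length_add_append, List.drop_length_add_append]
    have hcnt : cnt m' v = cnt m v := by rw [hrev, cnt_reverse]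
    exact occR_context a b m m' v hlen' hvm hpre hsuf hcnt
  have hw1 : a ++ m ++ b = a ++ (m ++ b) := List.append_assoc a m b
  have hw2 : a ++ m' ++ b = a ++ (m' ++ b) := List.append_assoc a m' b
  have hlw : k ≤ (a ++ m ++ b).length := by
    simp only [List.length_append]; omega
  refine Or.inr ⟨hlw, ?_, ?_, ?_⟩
  · simp only [List.length_append, hlen']; simp only [List.length_append] at hlw; omega
  · intro v hvk
    exact Or.inl (by rw [hw1, hw2, hocc v hvk])
  · -- boundary words
    have ht1 : (a ++ m ++ b).take (k - 1) = (a ++ p).take (k - 1) := by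
      rw [show a ++ m ++ b = (a ++ p) ++ (s ++ (p.reverse ++ b)) from by
        simp [hm, List.append_assoc]]
      rw [List.take_append_of_le_length (by simp only [List.length_append]; omega)]
    have ht2 : (a ++ m' ++ b).take (k - 1) = (a ++ p).take (k - 1) := by
      rw [show a ++ m' ++ b = (a ++ p) ++ (s.reverse ++ (p.reverse ++ b)) from by
        simp [hm', List.append_assoc]]
      rw [List.take_append_of_le_length (by simp only [List.length_append]; omega)]
    have hd1 : (a ++ m ++ b).drop ((a ++ m ++ b).length - (k - 1))
        = (p.reverse ++ b).drop ((p.reverse ++ b).length - (k - 1)) := by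
      rw [show a ++ m ++ b = (a ++ (p ++ s)) ++ (p.reverse ++ b) from by
        simp [hm, List.append_assoc]]
      rw [show ((a ++ (p ++ s)) ++ (p.reverse ++ b)).length - (k - 1)
          = (a ++ (p ++ s)).length + ((p.reverse ++ b).length - (k - 1)) from by
        simp only [List.length_append, List.length_reverse]; omega]
      rw [List.drop_length_add_append]
    have hd2 : (a ++ m' ++ b).drop ((a ++ m' ++ b).length - (k - 1))
        = (p.reverse ++ b).drop ((p.reverse ++ b).length - (k - 1)) := by
      rw [show a ++ m' ++ b = (a ++ (p ++ s.reverse)) ++ (p.reverse ++ b) from by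
        simp [hm', List.append_assoc]]
      rw [show ((a ++ (p ++ s.reverse)) ++ (p.reverse ++ b)).length - (k - 1)
          = (a ++ (p ++ s.reverse)).length + ((p.reverse ++ b).length - (k - 1)) from by
        simp only [List.length_append, List.length_reverse]; omega]
      rw [List.drop_length_add_append]
    rw [ht1, ht2, hd1, hd2]

/-- `n`-fold power of a word -/
def pw (u : List A) : ℕ → List A
  | 0 => []
  | n + 1 => u ++ pw u n

lemma pw_length (u : List A) (n : ℕ) : (pw u n).length = n * u.length := by
  induction n with
  | zero => simp [pw]
  | succ n ih => simp [pw, List.length_append, ih, Nat.succ_mul]; omega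

lemma syn_pow {L : Set (List A)} {u : List A} (hid : SynCong L (u ++ u) u) :
    ∀ n, SynCong L (pw u (n + 1)) u := by
  intro n
  induction n with
  | zero => intro a b; simp [pw]
  | succ n ih =>
    intro a b
    have h1 := hid a (pw u n ++ b)
    have h2 := ih a b
    simp only [pw, List.append_assoc] at h1 h2 ⊢
    exact h1.trans h2

lemma syn_rev {L : Set (List A)} (hrevL : ∀ w, w ∈ L ↔ w.reverse ∈ L)
    {x y : List A} (h : SynCong L x y) : SynCong L x.reverse y.reverse := by
  intro a b
  rw [hrevL (a ++ x.reverse ++ b), hrevL (a ++ y.reverse ++ b)]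
  simp only [List.reverse_append, List.reverse_reverse, List.append_assoc]
  have := h b.reverse a.reverse
  simpa only [List.append_assoc] using this

end LRTTaux

theorem lrtt_syntactic_identity {A : Type*} [DecidableEq A] (k t : ℕ) (hk : 0 < k) (ht : 0 < t)
    (L : Set (List A)) (hL : ∀ w w' : List A, LRTT k t w w' → (w ∈ L ↔ w' ∈ L))
    (u s : List A) (hu : u ≠ []) (hs : s ≠ [])
    (hid : SynCong L (u ++ u) u) :
    SynCong L (u ++ s ++ u.reverse) (u ++ s.reverse ++ u.reverse) := by
  have hu1 : 0 < u.length := List.length_pos_iff.mpr hu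
  have hrevL : ∀ w : List A, w ∈ L ↔ w.reverse ∈ L := fun w => hL _ _ (LRTTaux.lrtt_rev k t hk w)
  set p : List A := LRTTaux.pw u k with hpdef
  have hp : SynCong L p u := by
    have := LRTTaux.syn_pow hid (k - 1)
    rwa [show k - 1 + 1 = k from by omega] at this
  have hpr : SynCong L p.reverse u.reverse := LRTTaux.syn_rev hrevL hp
  have hplen : k ≤ p.length := by
    rw [hpdef, LRTTaux.pw_length]
    calc k = k * 1 := (Nat.mul_one k).symm
      _ ≤ k * u.length := Nat.mul_le_mul_left k hu1
  intro a b
  have e1 := hp a (s ++ (u.reverse ++ b))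
  have e1' := hp a (s.reverse ++ (u.reverse ++ b))
  have e2 := hpr (a ++ p ++ s) b
  have e2' := hpr (a ++ p ++ s.reverse) b
  have mid := hL _ _ (LRTTaux.lrtt_main k t hk a b p s hplen)
  simp only [List.append_assoc] at e1 e1' e2 e2' mid ⊢
  exact ((e1.symm.trans e2.symm).trans mid).trans (e2'.trans e1')
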